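/- Let C be a site and let B ⊆ C be a full subcategory closed under fiber products such that every object V of C admits a covering family {U_α → V} with each U_α an object of B. Let F be a presheaf of sets on C whose restriction to B (with the induced topology) satisfies the sheaf condition for all covering families consisting of objects of B. Then for every object U of B, the natural map F(U) → F^#(U) to the sheafification is a bijection. -/

import Mathlib

open CategoryTheory Opposite

universe u

/-- Let `C` be a site and `B ⊆ C` a full subcategory (encoded by a predicate on
objects) closed under fiber products, such that every object `V` of `C` admits a covering
family `{U_α → V}` with all `U_α` in `B`.  Let `F` be a presheaf of sets on `C` which
satisfies the sheaf condition for all covering families consisting of objects of `B`.  Then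
for every `U` in `B`, the natural map `F(U) → F^#(U)` to the sheafification is a
bijection. -/
theorem stmt6 {C : Type u} [SmallCategory C] [Limits.HasPullbacks C]
    (J : GrothendieckTopology C) (B : C → Prop)
    -- `B` is closed under fiber products
    (hBpull : ∀ {U V W : C} (f : U ⟶ W) (g : V ⟶ W),
      B U → B V → B W → B (Limits.pullback f g))
    -- every object admits a covering family with members in `B`
    (hBcov : ∀ V : C, ∃ R : Presieve V,
      (∀ ⦃W : C⦄ (f : W ⟶ V), R f → B W) ∧ Sieve.generate R ∈ J V)
    (F : Cᵒᵖ ⥤ Type u)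
    -- `F` satisfies the sheaf condition for covering families consisting of objects of `B`
    (hF : ∀ ⦃V : C⦄, B V → ∀ R : Presieve V,
      (∀ ⦃W : C⦄ (f : W ⟶ V), R f → B W) → Sieve.generate R ∈ J V →
        Presieve.IsSheafFor F R) :
    ∀ U : C, B U → Function.Bijective ((J.toSheafify F).app (op U)) := by
  set φ := J.toSheafify F with hφ
  -- For every covering sieve `T` of an object `W`, the `B`-part of `T` is still covering.
  have hBpart : ∀ (W : C) (T : Sieve W), T ∈ J W →
      Sieve.generate (fun V f => T.arrows f ∧ B V) ∈ J W := by
    intro W T hT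
    refine J.transitive hT _ ?_
    intro V f hf
    obtain ⟨R, hRB, hRmem⟩ := hBcov V
    refine J.superset_covering ?_ hRmem
    rintro Z g ⟨Y, e, h, hh, rfl⟩
    exact ⟨Y, e, h ≫ f, ⟨T.downward_closed hf h, hRB h hh⟩, by simp⟩
  -- hence `F` satisfies the sheaf condition for the `B`-part of any covering sieve of
  -- an object of `B`.
  have hFpart : ∀ (W : C), B W → ∀ (T : Sieve W), T ∈ J W →
      Presieve.IsSheafFor F (fun V f => T.arrows f ∧ B V) := by
    intro W hW T hT
    exact hF hW _ (fun V f hf => hf.2) (hBpart W T hT)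
  -- Injectivity on objects of `B`.
  have inj : ∀ (U : C), B U → Function.Injective (φ.app (op U)) := by
    intro U hU x y hxy
    have hT : Presheaf.equalizerSieve (F := F) x y ∈ J U :=
      Presheaf.equalizerSieve_mem J φ x y hxy
    refine (hFpart U hU _ hT).isSeparatedFor.ext ?_
    intro V f hf
    exact hf.1
  intro U hU
  refine ⟨inj U hU, ?_⟩
  -- Surjectivity.
  intro s
  have hS : Presheaf.imageSieve φ s ∈ J U := Presheaf.imageSieve_mem J φ s
  set R : Presieve U := fun V f => (Presheaf.imageSieve φ s).arrows f ∧ B V with hR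
  have hRB : ∀ ⦃W : C⦄ (f : W ⟶ U), R f → B W := fun V f hf => hf.2
  have hRmem : Sieve.generate R ∈ J U := hBpart U _ hS
  -- the candidate family of local sections of `F`
  let x : Presieve.FamilyOfElements F R := fun V f hf =>
    Presheaf.localPreimage φ s f hf.1
  have hx : x.Compatible := by
    rw [Presieve.pullbackCompatible_iff]
    intro V₁ V₂ f₁ f₂ h₁ h₂
    apply inj (Limits.pullback f₁ f₂) (hBpull f₁ f₂ h₁.2 h₂.2 hU)
    have n1 := FunctorToTypes.naturality φ (Limits.pullback.fst f₁ f₂).op (x f₁ h₁)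
    have n2 := FunctorToTypes.naturality φ (Limits.pullback.snd f₁ f₂).op (x f₂ h₂)
    dsimp -failIfUnchanged at n1 n2
    have e1 : φ.app (op V₁) (x f₁ h₁) = (J.sheafify F).map f₁.op s :=
      Presheaf.app_localPreimage φ s f₁ h₁.1
    have e2 : φ.app (op V₂) (x f₂ h₂) = (J.sheafify F).map f₂.op s :=
      Presheaf.app_localPreimage φ s f₂ h₂.1
    rw [n1, n2, e1, e2, ← FunctorToTypes.map_comp_apply, ← FunctorToTypes.map_comp_apply,
      ← op_comp, ← op_comp, Limits.pullback.condition]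
  obtain ⟨t, ht, -⟩ := (hF hU R hRB hRmem) x hx
  refine ⟨t, ?_⟩
  -- `φ.app t` and `s` agree on the covering presieve `R`, and `J.sheafify F` is a sheaf,
  -- hence separated.
  have hsheaf : Presieve.IsSheafFor (J.sheafify F) R := by
    rw [Presieve.isSheafFor_iff_generate]
    exact (isSheaf_iff_isSheaf_of_type J _ |>.1 (J.sheafify_isSheaf F)) _ hRmem
  refine hsheaf.isSeparatedFor.ext ?_
  intro V f hf
  have n := FunctorToTypes.naturality φ f.op t
  dsimp -failIfUnchanged at n
  calc (J.sheafify F).map f.op (φ.app (op U) t)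
      = φ.app (op V) (F.map f.op t) := n.symm
    _ = φ.app (op V) (x f hf) := by rw [ht f hf]
    _ = (J.sheafify F).map f.op s := Presheaf.app_localPreimage φ s f hf.1
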